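/- There exists a probability measure p on ℝ × ℝ, a black box B : ℝ × ℝ → {0,1}, and an explanation E : ℝ × ℝ → {0,1} such that E depends only on the first coordinate (the desired feature), B depends only on the second coordinate (the prohibited feature), B and E are not identically constant on the support of p, and yet the relative error of E with respect to B under p is zero, i.e. L(E, B) = 0 (equivalently, E has perfect fidelity 1 − L(E,B) = 1). Concretely one may take p to be the pushforward of the standard Gaussian on ℝ under x ↦ (x, x), B((x₁,x₂)) = 𝟙[x₂ ≥ 0], and E((x₁,x₂)) = 𝟙[x₁ ≥ 0]. -/
import Mathlib


open MeasureTheory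

/-- The support of a measure `p` on a topological space: the set of points all of whose
neighborhoods have positive measure. -/
def measureSupport {X : Type*} [TopologicalSpace X] [MeasurableSpace X]
    (p : Measure X) : Set X :=
  {x | ∀ U ∈ nhds x, p U ≠ 0}

open Classical in
/-- Relative error `L(F, F') = E_{x ∼ p}[𝟙[F x ≠ F' x]]` under the 0-1 loss. -/
noncomputable def relativeError {X Y : Type*} [MeasurableSpace X]
    (p : Measure X) (F F' : X → Y) : ℝ :=
  ∫ x, (if F x ≠ F' x then (1 : ℝ) else 0) ∂p

/-- Theorem 1 (existence of potentially misleading explanations with perfect fidelity):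
there exist a probability measure `p` on `ℝ × ℝ`, a black box `B : ℝ × ℝ → {0,1}` and an
explanation `E : ℝ × ℝ → {0,1}` such that `E` depends only on the first coordinate (the
desired feature), `B` depends only on the second coordinate (the prohibited feature),
neither `B` nor `E` is identically constant on the support of `p`, and yet `L(E, B) = 0`
(i.e. `E` has perfect fidelity `1 − L(E, B) = 1`). -/
theorem exists_misleading_explanation_perfect_fidelity :
    ∃ (p : Measure (ℝ × ℝ)) (B E : ℝ × ℝ → Bool),
      IsProbabilityMeasure p ∧
      (∀ x x' : ℝ × ℝ, x.1 = x'.1 → E x = E x') ∧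
      (∀ x x' : ℝ × ℝ, x.2 = x'.2 → B x = B x') ∧
      (¬ ∃ c : Bool, ∀ x ∈ measureSupport p, B x = c) ∧
      (¬ ∃ c : Bool, ∀ x ∈ measureSupport p, E x = c) ∧
      relativeError p E B = 0 := by
  set a : ℝ × ℝ := (1, 1)
  set b : ℝ × ℝ := (-1, -1)
  set p : Measure (ℝ × ℝ) :=
    (2 : ENNReal)⁻¹ • (Measure.dirac a + Measure.dirac b) with hp
  refine ⟨p, fun x => decide (0 ≤ x.2), fun x => decide (0 ≤ x.1), ?_, ?_, ?_, ?_, ?_, ?_⟩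
  · constructor
    simp [hp, Measure.add_apply]
    rw [ENNReal.inv_two_add_inv_two]
  · intro x x' h; simp [h]
  · intro x x' h; simp [h]
  · -- a, b are in the support
    have hmem : ∀ z : ℝ × ℝ, z = a ∨ z = b → z ∈ measureSupport p := by
      intro z hz U hU hU0
      have hzU : z ∈ U := mem_of_mem_nhds hU
      have : p U ≠ 0 := by
        simp only [hp, Measure.smul_apply, Measure.add_apply, smul_eq_mul]
        intro h
        rcases mul_eq_zero.mp h with h | h
        · exact (by norm_num : (2 : ENNReal)⁻¹ ≠ 0) h
        · rcases hz with rfl | rfl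
          · have := Measure.dirac_apply_of_mem hzU
            simp [this] at h
          · have := Measure.dirac_apply_of_mem hzU
            simp [this] at h
      exact this hU0
    rintro ⟨c, hc⟩
    have h1 := hc a (hmem a (Or.inl rfl))
    have h2 := hc b (hmem b (Or.inr rfl))
    simp [a, b] at h1 h2
    rw [h1] at h2; norm_num at h2
  · rintro ⟨c, hc⟩
    have hmem : ∀ z : ℝ × ℝ, z = a ∨ z = b → z ∈ measureSupport p := by
      intro z hz U hU hU0
      have hzU : z ∈ U := mem_of_mem_nhds hU
      have : p U ≠ 0 := by
        simp only [hp, Measure.smul_apply, Measure.add_apply, smul_eq_mul]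
        intro h
        rcases mul_eq_zero.mp h with h | h
        · exact (by norm_num : (2 : ENNReal)⁻¹ ≠ 0) h
        · rcases hz with rfl | rfl
          · have := Measure.dirac_apply_of_mem hzU
            simp [this] at h
          · have := Measure.dirac_apply_of_mem hzU
            simp [this] at h
      exact this hU0
    have h1 := hc a (hmem a (Or.inl rfl))
    have h2 := hc b (hmem b (Or.inr rfl))
    simp [a, b] at h1 h2
    rw [h1] at h2; norm_num at h2
  · unfold relativeError
    apply integral_eq_zero_of_ae
    have hnull : p (({a, b} : Set (ℝ × ℝ))ᶜ) = 0 := by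
      simp only [hp, Measure.smul_apply, Measure.add_apply, smul_eq_mul]
      have ha : Measure.dirac a ({a, b} : Set (ℝ × ℝ))ᶜ = 0 := by
        rw [Measure.dirac_apply' _ (by measurability)]
        simp [Set.indicator, a, b]
      have hb : Measure.dirac b ({a, b} : Set (ℝ × ℝ))ᶜ = 0 := by
        rw [Measure.dirac_apply' _ (by measurability)]
        simp [Set.indicator, a, b]
      simp [ha, hb]
    rw [Filter.EventuallyEq, ae_iff]
    refine measure_mono_null (fun x hx => ?_) hnull
    simp only [Set.mem_setOf_eq, Pi.zero_apply] at hx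
    intro hxab
    rcases hxab with rfl | rfl <;> simp [a, b] at hx
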